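/- Let f be a piecewise contracting interval map and x ∈ X̃ := ⋂_{n≥0} f^{-n}(X \ Δ). Then the ω-limit set ω(x) is nonempty, compact, and pseudo-invariant, i.e. for every x₀ ∈ ω(x) the left limit lim_{y→x₀⁻} f(y) or the right limit lim_{y→x₀⁺} f(y) belongs to ω(x). -/

import Mathlib

open Filter Topology Set

/-- A piecewise contracting interval map on `X = [c 0, c N]` with contraction pieces
`X_i` delimited by the points `c 0 < c 1 < … < c N`, contraction rate `lam ∈ (0,1)`,
and `fe i` the (unique) continuous `lam`-Lipschitz extension of `f` restricted to the
`i`-th piece to its closure `[c (i-1), c i]`. The pieces are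
`X_1 = [c 0, c 1)`, `X_i = (c (i-1), c i)` for `1 < i < N`, `X_N = (c (N-1), c N]`. -/
structure PCIM where
  N : ℕ
  hN : 2 ≤ N
  c : ℕ → ℝ
  lam : ℝ
  f : ℝ → ℝ
  fe : ℕ → ℝ → ℝ
  hc : StrictMonoOn c (Set.Iic N)
  hlam : lam ∈ Set.Ioo (0 : ℝ) 1
  hmap : Set.MapsTo f (Set.Icc (c 0) (c N)) (Set.Icc (c 0) (c N))
  hfe_lip : ∀ i, 1 ≤ i → i ≤ N →
    ∀ x ∈ Set.Icc (c (i - 1)) (c i), ∀ y ∈ Set.Icc (c (i - 1)) (c i),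
      |fe i x - fe i y| ≤ lam * |x - y|
  hfe_eq : ∀ i, 1 ≤ i → i ≤ N → ∀ x ∈ Set.Ioo (c (i - 1)) (c i), fe i x = f x
  hfe_left : fe 1 (c 0) = f (c 0)
  hfe_right : fe N (c N) = f (c N)

namespace PCIM

variable (P : PCIM)

/-- The phase space `X = [c 0, c N]`. -/
def X : Set ℝ := Set.Icc (P.c 0) (P.c P.N)

/-- The `i`-th contraction piece (`1 ≤ i ≤ N`). -/
def piece (i : ℕ) : Set ℝ :=
  Set.Ioo (P.c (i - 1)) (P.c i)
    ∪ (if i = 1 then {P.c 0} else (∅ : Set ℝ))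
    ∪ (if i = P.N then {P.c P.N} else (∅ : Set ℝ))

/-- `Δ`, the set of interior boundary points of the pieces. -/
def Δ : Set ℝ := {y | ∃ i, 1 ≤ i ∧ i < P.N ∧ y = P.c i}

/-- `X̃ = ⋂ n, f⁻ⁿ(X \ Δ)`: points whose whole forward orbit stays in `X` and avoids `Δ`. -/
def Xt : Set ℝ := {x | ∀ n : ℕ, P.f^[n] x ∈ P.X \ P.Δ}

/-- Forward orbit of `x`. -/
def orbit (x : ℝ) : Set ℝ := Set.range fun n : ℕ => P.f^[n] x

/-- The ω-limit set of `x`: limits of subsequences of the forward orbit. -/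
def omega (x : ℝ) : Set ℝ :=
  {y | ∃ φ : ℕ → ℕ, StrictMono φ ∧
    Filter.Tendsto (fun n => P.f^[φ n] x) Filter.atTop (nhds y)}

/-- `d_i^- = f_i (c_i)`, the left lateral limit of `f` at `c i`. -/
def dminus (i : ℕ) : ℝ := P.fe i (P.c i)

/-- `d_i^+ = f_{i+1} (c_i)`, the right lateral limit of `f` at `c i`. -/
def dplus (i : ℕ) : ℝ := P.fe (i + 1) (P.c i)

/-- `D⁻ = {d_1^-, …, d_{N-1}^-}`. -/
def Dminus : Set ℝ := {y | ∃ i, 1 ≤ i ∧ i < P.N ∧ y = P.dminus i}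

/-- `D⁺ = {d_1^+, …, d_{N-1}^+}`. -/
def Dplus : Set ℝ := {y | ∃ i, 1 ≤ i ∧ i < P.N ∧ y = P.dplus i}

/-- `D`, the set of all one-sided limits of `f` at endpoints of the pieces. -/
def D : Set ℝ := P.Dminus ∪ P.Dplus ∪ {P.fe 1 (P.c 0), P.fe P.N (P.c P.N)}

/-- `A` is pseudo-invariant: for every `x ∈ A` at least one one-sided limit of `f`
at `x` (i.e. some `fe i x` with `x` in the closure of the `i`-th piece) belongs to `A`. -/
def PseudoInvariant (A : Set ℝ) : Prop :=
  ∀ x ∈ A, ∃ i, 1 ≤ i ∧ i ≤ P.N ∧ x ∈ Set.Icc (P.c (i - 1)) (P.c i) ∧ P.fe i x ∈ A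

/-- `F_i(A) = closure (f (A ∩ X_i))`. -/
def Fmap (i : ℕ) (A : Set ℝ) : Set ℝ := closure (P.f '' (A ∩ P.piece i))

/-- For a word `w = [i_1, …, i_n]`, the set `F_{i_n} ∘ … ∘ F_{i_1} (X)`. -/
def atomOf (w : List ℕ) : Set ℝ := w.foldl (fun S i => P.Fmap i S) P.X

/-- `A` is an atom of generation `n`. -/
def IsAtomGen (n : ℕ) (A : Set ℝ) : Prop :=
  ∃ w : List ℕ, w.length = n ∧ (∀ i ∈ w, 1 ≤ i ∧ i ≤ P.N) ∧
    A = P.atomOf w ∧ A.Nonempty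

/-- `Lam n` is `Λ_{n+1}` of the paper: `Λ_1 = closure (f(X \ Δ))`,
`Λ_{n+1} = closure (f(Λ_n \ Δ))`. -/
def Lam (P : PCIM) : ℕ → Set ℝ
  | 0 => closure (P.f '' (P.X \ P.Δ))
  | n + 1 => closure (P.f '' (P.Lam n \ P.Δ))

/-- The attractor `Λ = ⋂_{n ≥ 1} Λ_n`. -/
def attractor : Set ℝ := ⋂ n : ℕ, P.Lam n

/-- `c i ∈ Δ_lr(x)`: the boundary point `c i` is left-right recurrently visited by the
orbit of `x`. -/
def lrVisited (x : ℝ) (i : ℕ) : Prop :=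
  1 ≤ i ∧ i < P.N ∧
  ∃ l r : ℕ → ℕ, StrictMono l ∧ StrictMono r ∧
    (∀ j, P.f^[l j] x ∈ P.piece i) ∧ (∀ j, P.f^[r j] x ∈ P.piece (i + 1)) ∧
    Filter.Tendsto (fun j => P.f^[l j] x) Filter.atTop (nhds (P.c i)) ∧
    Filter.Tendsto (fun j => P.f^[r j] x) Filter.atTop (nhds (P.c i))

/-- `c i ∈ Δ_lr`: `c i` is left-right recurrently visited by the orbit of some point
of `X̃`. -/
def inΔlr (i : ℕ) : Prop := ∃ x ∈ P.Xt, P.lrVisited x i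

/-- The set `Δ_lr ⊆ Δ`. -/
def ΔlrSet : Set ℝ := {y | ∃ i, P.inΔlr i ∧ y = P.c i}

/-- The relation `∼⁺` on `Δ_lr`: `c_i ∼⁺ c_j` iff `c_i = c_j` or
(`c_i ∈ Δ_lr(d_j^+)` and `c_j ∈ Δ_lr(d_i^+)`). -/
def simP (a b : ℝ) : Prop :=
  a = b ∨ ∃ i j, P.inΔlr i ∧ P.inΔlr j ∧ a = P.c i ∧ b = P.c j ∧
    P.lrVisited (P.dplus j) i ∧ P.lrVisited (P.dplus i) j

/-- The relation `≼⁺` (on representatives): `[c_i] ≼⁺ [c_j]` iff `[c_i] = [c_j]` or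
`c_i ∈ Δ_lr(d_j^+)`. -/
def preP (a b : ℝ) : Prop :=
  P.simP a b ∨ ∃ i j, P.inΔlr i ∧ P.inΔlr j ∧ a = P.c i ∧ b = P.c j ∧
    P.lrVisited (P.dplus j) i

/-- `[c i]` is a minimal class for the partial order `≼⁺`. -/
def MinimalClass (i : ℕ) : Prop :=
  P.inΔlr i ∧ ∀ j, P.inΔlr j → P.preP (P.c j) (P.c i) → P.simP (P.c j) (P.c i)

/-- `f` is injective on each contraction piece. -/
def InjPieces : Prop := ∀ i, 1 ≤ i → i ≤ P.N → Set.InjOn P.f (P.piece i)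

/-- `f` is (strictly) increasing on each contraction piece. -/
def IncrPieces : Prop := ∀ i, 1 ≤ i → i ≤ P.N → StrictMonoOn P.f (P.piece i)

/-- `x` is a periodic point of `f`. -/
def IsPeriodic (x : ℝ) : Prop := ∃ p : ℕ, 1 ≤ p ∧ P.f^[p] x = x

/-- `η` is the itinerary of `x`: `f^[n] x ∈ X_{η n}` for all `n`. -/
def IsItinerary (x : ℝ) (η : ℕ → ℕ) : Prop :=
  ∀ n, 1 ≤ η n ∧ η n ≤ P.N ∧ P.f^[n] x ∈ P.piece (η n)

end PCIM

/-- The word of length `n` of the sequence `η` starting at position `t`. -/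
def wordAt (η : ℕ → ℕ) (t n : ℕ) : List ℕ := (List.range n).map fun m => η (t + m)

/-- The complexity function of the sequence `η`: the number of distinct words of
length `n` occurring in `η`. -/
noncomputable def complexity (η : ℕ → ℕ) (n : ℕ) : ℕ := Set.ncard {w : List ℕ | ∃ t, w = wordAt η t n}


section Aux

open PCIM

variable (P : PCIM)

lemma PCIM.c_mono {i j : ℕ} (hij : i ≤ j) (hj : j ≤ P.N) : P.c i ≤ P.c j := by
  rcases eq_or_lt_of_le hij with rfl | h
  · exact le_rfl
  · exact (P.hc (Set.mem_Iic.mpr (le_trans hij hj)) (Set.mem_Iic.mpr hj) h).le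

lemma PCIM.piece_subset_Icc {i : ℕ} (h1 : 1 ≤ i) (hN : i ≤ P.N) :
    P.piece i ⊆ Set.Icc (P.c (i - 1)) (P.c i) := by
  intro y hy
  rcases hy with (hy | hy) | hy
  · exact Set.Ioo_subset_Icc_self hy
  · split_ifs at hy with h
    · subst h
      simp only [Set.mem_singleton_iff] at hy
      subst hy
      exact ⟨le_rfl, P.c_mono (Nat.zero_le 1) hN⟩
    · exact absurd hy (Set.notMem_empty y)
  · split_ifs at hy with h
    · subst h
      simp only [Set.mem_singleton_iff] at hy
      subst hy
      exact ⟨P.c_mono (Nat.sub_le _ _) le_rfl, le_refl _⟩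
    · exact absurd hy (Set.notMem_empty y)

lemma PCIM.f_eq_fe {i : ℕ} (h1 : 1 ≤ i) (hN : i ≤ P.N) {y : ℝ} (hy : y ∈ P.piece i) :
    P.f y = P.fe i y := by
  rcases hy with (hy | hy) | hy
  · exact (P.hfe_eq i h1 hN y hy).symm
  · split_ifs at hy with h
    · subst h
      simp only [Set.mem_singleton_iff] at hy
      subst hy
      exact P.hfe_left.symm
    · exact absurd hy (Set.notMem_empty y)
  · split_ifs at hy with h
    · subst h
      simp only [Set.mem_singleton_iff] at hy
      subst hy
      exact P.hfe_right.symm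
    · exact absurd hy (Set.notMem_empty y)

lemma PCIM.exists_piece {y : ℝ} (hy : y ∈ P.X \ P.Δ) :
    ∃ i, 1 ≤ i ∧ i ≤ P.N ∧ y ∈ P.piece i := by
  obtain ⟨⟨hy0, hyN⟩, hyΔ⟩ := hy
  have hex : ∃ i, 1 ≤ i ∧ y ≤ P.c i := ⟨P.N, le_trans one_le_two P.hN, hyN⟩
  classical
  set i := Nat.find hex with hi
  obtain ⟨hi1, hile⟩ := Nat.find_spec hex
  have hiN : i ≤ P.N := by
    by_contra h
    push_neg at h
    exact absurd (Nat.find_min hex (m := P.N) h ⟨le_trans one_le_two P.hN, hyN⟩) (by simp)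
  have hlow : P.c (i - 1) ≤ y := by
    rcases Nat.eq_or_lt_of_le hi1 with h | h
    · have h0 : i - 1 = 0 := by omega
      rw [h0]; exact hy0
    · -- i ≥ 2, so i - 1 ≥ 1; minimality
      by_contra hcon
      push_neg at hcon
      have : 1 ≤ i - 1 := by omega
      exact absurd (Nat.find_min hex (m := i - 1) (by omega) ⟨this, hcon.le⟩) (by simp)
  rcases eq_or_lt_of_le hile with heq | hlt
  · -- y = c i
    have hiN' : i = P.N := by
      by_contra h
      exact hyΔ ⟨i, hi1, lt_of_le_of_ne hiN h, heq⟩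
    refine ⟨i, hi1, hiN, Or.inr ?_⟩
    rw [if_pos hiN']
    exact Set.mem_singleton_iff.mpr (by rw [heq, ← hi, hiN'])
  · rcases eq_or_lt_of_le hlow with heq0 | hlt0
    · -- y = c (i-1); since y ∉ Δ, i - 1 = 0
      have : i = 1 := by
        by_contra h
        have h1' : 1 ≤ i - 1 := by omega
        have h2' : i - 1 < P.N := by omega
        exact hyΔ ⟨i - 1, h1', h2', heq0.symm⟩
      refine ⟨i, hi1, hiN, Or.inl (Or.inr ?_)⟩
      rw [if_pos this]
      exact Set.mem_singleton_iff.mpr (by rw [← heq0, this])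
    · exact ⟨i, hi1, hiN, Or.inl (Or.inl ⟨hlt0, hlt⟩)⟩

lemma PCIM.omega_eq (x : ℝ) :
    P.omega x = {y | MapClusterPt y atTop (fun n => P.f^[n] x)} := by
  ext y
  constructor
  · rintro ⟨φ, hφ, hy⟩
    exact MapClusterPt.of_comp hφ.tendsto_atTop hy.mapClusterPt
  · intro hy
    obtain ⟨ψ, hψ, hy'⟩ := TopologicalSpace.FirstCountableTopology.tendsto_subseq hy
    exact ⟨ψ, hψ, hy'⟩

end Aux

/-- For `x ∈ X̃`, the ω-limit set `ω(x)` is nonempty, compact and pseudo-invariant. -/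
theorem stmt1 (P : PCIM) (x : ℝ) (hx : x ∈ P.Xt) :
    (P.omega x).Nonempty ∧ IsCompact (P.omega x) ∧ P.PseudoInvariant (P.omega x) := by
  set u : ℕ → ℝ := fun n => P.f^[n] x with hu_def
  have hu : ∀ n, u n ∈ P.X \ P.Δ := hx
  have huX : ∀ n, u n ∈ Set.Icc (P.c 0) (P.c P.N) := fun n => (hu n).1
  refine ⟨?_, ?_, ?_⟩
  · obtain ⟨a, -, φ, hφ, ha⟩ := isCompact_Icc.tendsto_subseq huX
    exact ⟨a, φ, hφ, ha⟩
  · have hsub : P.omega x ⊆ Set.Icc (P.c 0) (P.c P.N) := by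
      rintro y ⟨φ, hφ, hy⟩
      exact isClosed_Icc.mem_of_tendsto hy (Filter.Eventually.of_forall fun n => huX (φ n))
    have hcl : IsClosed (P.omega x) := by
      rw [P.omega_eq x]
      exact isClosed_setOf_clusterPt
    exact isCompact_Icc.of_isClosed_subset hcl hsub
  · rintro x₀ ⟨φ, hφ, hx₀⟩
    -- pigeonhole: some piece is visited frequently along φ
    have hpig : ∃ i, 1 ≤ i ∧ i ≤ P.N ∧ ∃ᶠ n in atTop, u (φ n) ∈ P.piece i := by
      by_contra h
      push_neg at h
      have hev : ∀ i ∈ Finset.Icc 1 P.N, ∀ᶠ n in atTop, u (φ n) ∉ P.piece i := by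
        intro i hi
        simp only [Finset.mem_Icc] at hi
        have := h i hi.1 hi.2
        exact this
      rw [← Filter.eventually_all_finset] at hev
      obtain ⟨n, hn⟩ := hev.exists
      obtain ⟨i, hi1, hiN, hmem⟩ := P.exists_piece (hu (φ n))
      exact hn i (Finset.mem_Icc.mpr ⟨hi1, hiN⟩) hmem
    obtain ⟨i, hi1, hiN, hfreq⟩ := hpig
    obtain ⟨ψ, hψ, hψmem⟩ := Filter.extraction_of_frequently_atTop hfreq
    set v : ℕ → ℝ := fun n => u (φ (ψ n)) with hv_def
    have hv : Filter.Tendsto v Filter.atTop (nhds x₀) := hx₀.comp hψ.tendsto_atTop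
    have hvIcc : ∀ n, v n ∈ Set.Icc (P.c (i - 1)) (P.c i) := fun n =>
      P.piece_subset_Icc hi1 hiN (hψmem n)
    have hx₀Icc : x₀ ∈ Set.Icc (P.c (i - 1)) (P.c i) :=
      isClosed_Icc.mem_of_tendsto hv (Filter.Eventually.of_forall hvIcc)
    refine ⟨i, hi1, hiN, hx₀Icc, ?_⟩
    -- fe i (v n) → fe i x₀ by the Lipschitz bound
    have hdist : ∀ n, dist (P.fe i (v n)) (P.fe i x₀) ≤ P.lam * dist (v n) x₀ := by
      intro n
      rw [Real.dist_eq, Real.dist_eq]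
      exact P.hfe_lip i hi1 hiN _ (hvIcc n) _ hx₀Icc
    have hd0 : Filter.Tendsto (fun n => dist (v n) x₀) Filter.atTop (nhds 0) :=
      tendsto_iff_dist_tendsto_zero.mp hv
    have hd0' : Filter.Tendsto (fun n => P.lam * dist (v n) x₀) Filter.atTop (nhds 0) := by
      simpa using hd0.const_mul P.lam
    have hfe_tendsto : Filter.Tendsto (fun n => P.fe i (v n)) Filter.atTop (nhds (P.fe i x₀)) := by
      rw [tendsto_iff_dist_tendsto_zero]
      exact squeeze_zero (fun n => dist_nonneg) hdist hd0'
    -- fe i (v n) = u (φ (ψ n) + 1)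
    have hkey : ∀ n, P.fe i (v n) = u (φ (ψ n) + 1) := by
      intro n
      rw [← P.f_eq_fe hi1 hiN (hψmem n)]
      simp only [hu_def, hv_def]
      rw [Function.iterate_succ_apply']
    refine ⟨fun n => φ (ψ n) + 1, ?_, ?_⟩
    · exact (hφ.comp hψ).add_const 1
    · have : (fun n => u (φ (ψ n) + 1)) = fun n => P.fe i (v n) := by
        ext n; exact (hkey n).symm
      simpa [hu_def] using this ▸ hfe_tendsto
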